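/- Suppose the digraph of W is strongly connected and all edge weights are nonnegative (W k l ≥ 0 for all k, l). Then for every nominal prescribed-time trajectory X with parameters ρ1, ρ2 > 0 and prescribed time T1 > 0, there exists c ∈ ℝ such that X t k = c for all t ≥ T1 and all nodes k (prescribed-time consensus within the preassigned time T1). -/

import Mathlib

open Matrix

/-- Time-varying gain: `μ_T(t) = κ/(T − t)` for `0 ≤ t < T`, `0` otherwise. -/
noncomputable def gain (κ T t : ℝ) : ℝ := if 0 ≤ t ∧ t < T then κ / (T - t) else 0

/-- Signed Laplacian `L = D − W` with `D k k = ∑_l |W k l|`. -/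
noncomputable def sLap {N : ℕ} (W : Matrix (Fin N) (Fin N) ℝ) : Matrix (Fin N) (Fin N) ℝ :=
  Matrix.diagonal (fun k => ∑ l, |W k l|) - W

/-- Node `i` reaches node `j`: reflexive–transitive closure of the edge relation
`E i j ↔ W j i ≠ 0`. -/
def Reaches {N : ℕ} (W : Matrix (Fin N) (Fin N) ℝ) : Fin N → Fin N → Prop :=
  Relation.ReflTransGen (fun i j => W j i ≠ 0)

def StronglyConnected {N : ℕ} (W : Matrix (Fin N) (Fin N) ℝ) : Prop :=
  ∀ i j, Reaches W i j

def QuasiStronglyConnected {N : ℕ} (W : Matrix (Fin N) (Fin N) ℝ) : Prop :=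
  ∃ r, ∀ j, Reaches W r j

def WeaklyConnected {N : ℕ} (W : Matrix (Fin N) (Fin N) ℝ) : Prop :=
  ∀ i j, Relation.ReflTransGen (fun a b => W b a ≠ 0 ∨ W a b ≠ 0) i j

/-- `k` is a leader: every node reaching `k` is reached back by `k`. -/
def IsLeader {N : ℕ} (W : Matrix (Fin N) (Fin N) ℝ) (k : Fin N) : Prop :=
  ∀ j, Reaches W j k → Reaches W k j

/-- Closed strong component of a leader `k`. -/
def CSC {N : ℕ} (W : Matrix (Fin N) (Fin N) ℝ) (k : Fin N) : Set (Fin N) :=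
  {j | Reaches W j k ∧ Reaches W k j}

/-- A gauge for a node set `S`. -/
def IsGauge {N : ℕ} (W : Matrix (Fin N) (Fin N) ℝ) (S : Set (Fin N)) (g : Fin N → ℝ) : Prop :=
  (∀ k ∈ S, g k = 1 ∨ g k = -1) ∧ ∀ k ∈ S, ∀ l ∈ S, g k * W k l * g l = |W k l|

/-- Nominal prescribed-time trajectory of the protocol (4). -/
def NominalTraj {N : ℕ} (W : Matrix (Fin N) (Fin N) ℝ) (κ ρ1 ρ2 T1 : ℝ)
    (X : ℝ → Fin N → ℝ) : Prop :=
  Continuous X ∧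
  ∀ t : ℝ, 0 ≤ t → t ≠ T1 →
    HasDerivAt X ((-(ρ1 + ρ2 * gain κ T1 t)) • (sLap W).mulVec (X t)) t

lemma sLap_rowsum {N : ℕ} (W : Matrix (Fin N) (Fin N) ℝ) (hpos : ∀ k l, 0 ≤ W k l) (k : Fin N) :
    ∑ l, sLap W k l = 0 := by
  have h : ∀ l, |W k l| = W k l := fun l => abs_of_nonneg (hpos k l)
  simp [sLap, Matrix.sub_apply, Finset.sum_sub_distrib, Matrix.diagonal_apply, h]

lemma sLap_mulVec_const {N : ℕ} (W : Matrix (Fin N) (Fin N) ℝ) (hpos : ∀ k l, 0 ≤ W k l)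
    (c : ℝ) (k : Fin N) : (sLap W).mulVec (fun _ => c) k = 0 := by
  simp only [Matrix.mulVec, dotProduct]
  rw [← Finset.sum_mul, sLap_rowsum W hpos k, zero_mul]

lemma wLz {N : ℕ} (W : Matrix (Fin N) (Fin N) ℝ) (w : Fin N → ℝ)
    (hwL : ∀ l, ∑ k, w k * sLap W k l = 0) (z : Fin N → ℝ) :
    ∑ k, w k * ((sLap W).mulVec z) k = 0 := by
  simp only [Matrix.mulVec, dotProduct, Finset.mul_sum]
  rw [Finset.sum_comm]
  refine Finset.sum_eq_zero fun l _ => ?_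
  have : ∑ k, w k * (sLap W k l * z l) = (∑ k, w k * sLap W k l) * z l := by
    rw [Finset.sum_mul]; congr 1; ext k; ring
  rw [this, hwL l, zero_mul]

lemma sLap_apply {N : ℕ} (W : Matrix (Fin N) (Fin N) ℝ) (k l : Fin N) :
    sLap W k l = (if k = l then ∑ m, |W k m| else 0) - W k l := by
  simp [sLap, Matrix.sub_apply, Matrix.diagonal_apply]

lemma exists_pos_left_null {N : ℕ} (hN : 0 < N) (W : Matrix (Fin N) (Fin N) ℝ)
    (hSC : StronglyConnected W) (hpos : ∀ k l, 0 ≤ W k l) :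
    ∃ w : Fin N → ℝ, (∀ k, 0 < w k) ∧ ∀ l, ∑ k, w k * sLap W k l = 0 := by
  set d : Fin N → ℝ := fun k => ∑ l, |W k l| with hd
  have hdW : ∀ k, d k = ∑ l, W k l := by
    intro k; exact Finset.sum_congr rfl fun l _ => abs_of_nonneg (hpos k l)
  have hd0 : ∀ k, 0 ≤ d k := fun k => Finset.sum_nonneg fun l _ => abs_nonneg _
  -- det = 0
  have hdet : (sLap W).det = 0 := by
    have h1 : (sLap W).mulVec (fun _ => (1:ℝ)) = 0 := by
      funext k
      simp only [Matrix.mulVec, dotProduct, mul_one]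
      have : ∑ l, sLap W k l = 0 := by
        simp only [sLap_apply, Finset.sum_sub_distrib, Finset.sum_ite_eq, Finset.mem_univ,
          if_true]
        rw [← hdW k]; ring
      simpa using this
    exact Matrix.exists_mulVec_eq_zero_iff.mp
      ⟨fun _ => 1, fun h => one_ne_zero (congrFun h ⟨0, hN⟩), h1⟩
  have hdetT : (sLap W)ᵀ.det = 0 := by rwa [Matrix.det_transpose]
  obtain ⟨v, hv0, hv⟩ := Matrix.exists_mulVec_eq_zero_iff.mpr hdetT
  have hv' : ∀ l, ∑ k, sLap W k l * v k = 0 := by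
    intro l
    have := congrFun hv l
    simpa [Matrix.mulVec, dotProduct, Matrix.transpose_apply] using this
  set c : ℝ := 1 + ∑ j, d j with hc
  have hcd : ∀ k, 0 < c - d k := by
    intro k
    have : d k ≤ ∑ j, d j := Finset.single_le_sum (fun j _ => hd0 j) (Finset.mem_univ k)
    linarith
  set P : Matrix (Fin N) (Fin N) ℝ := fun k l => (if k = l then c - d k else 0) + W k l with hP
  have hPapp : ∀ k l, P k l = (if k = l then c - d k else 0) + W k l := fun k l => rfl
  have hPnn : ∀ k l, 0 ≤ P k l := by
    intro k l
    rw [hPapp]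
    by_cases h : k = l
    · rw [if_pos h]; have := hcd k; have := hpos k l; linarith
    · rw [if_neg h]; have := hpos k l; linarith
  have hPW : ∀ k l, W k l ≤ P k l := by
    intro k l
    rw [hPapp]
    by_cases h : k = l
    · rw [if_pos h]; have := hcd k; linarith
    · rw [if_neg h]; linarith
  have hProw : ∀ k, ∑ l, P k l = c := by
    intro k
    have h1 : ∑ l, P k l = (∑ l, (if k = l then c - d k else 0)) + ∑ l, W k l := by
      rw [← Finset.sum_add_distrib]
    rw [h1, Finset.sum_ite_eq, if_pos (Finset.mem_univ k), ← hdW k]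
    ring
  -- key relation: sLap k l = c δ - P
  have hLP : ∀ k l, sLap W k l = (if k = l then c else 0) - P k l := by
    intro k l
    rw [sLap_apply, hPapp]
    by_cases h : k = l <;> simp [h] <;> ring
  have hvP : ∀ l, ∑ k, v k * P k l = c * v l := by
    intro l
    have h0 := hv' l
    have h2 : ∑ k, sLap W k l * v k
        = (∑ k, (if k = l then c else 0) * v k) - ∑ k, P k l * v k := by
      rw [← Finset.sum_sub_distrib]
      exact Finset.sum_congr rfl fun k _ => by rw [hLP k l]; ring
    rw [h2] at h0
    simp only [Finset.sum_ite_eq', ite_mul, zero_mul, Finset.mem_univ, if_true] at h0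
    have h3 : ∑ k, v k * P k l = ∑ k, P k l * v k := Finset.sum_congr rfl fun k _ => mul_comm _ _
    rw [h3]; linarith
  set w : Fin N → ℝ := fun k => |v k| with hw
  have h1 : ∀ l, c * w l ≤ ∑ k, w k * P k l := by
    intro l
    calc c * w l = |c * v l| := by
          rw [abs_mul, abs_of_pos]; positivity
      _ = |∑ k, v k * P k l| := by rw [hvP l]
      _ ≤ ∑ k, |v k * P k l| := Finset.abs_sum_le_sum_abs _ _
      _ = ∑ k, w k * P k l := Finset.sum_congr rfl fun k _ => by
          rw [abs_mul, abs_of_nonneg (hPnn k l)]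
  have hwP : ∀ l, ∑ k, w k * P k l = c * w l := by
    have hsum : ∑ l, (∑ k, w k * P k l - c * w l) = 0 := by
      rw [Finset.sum_sub_distrib, Finset.sum_comm]
      have h5 : ∑ k, ∑ l, w k * P k l = ∑ k, w k * c :=
        Finset.sum_congr rfl fun k _ => by rw [← Finset.mul_sum, hProw k]
      rw [h5, ← Finset.sum_sub_distrib]
      exact Finset.sum_eq_zero fun i _ => by ring
    intro l
    have h6 := (Finset.sum_eq_zero_iff_of_nonneg
      (fun i _ => sub_nonneg.mpr (h1 i))).mp hsum l (Finset.mem_univ l)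
    linarith
  have hc0 : 0 < c := by
    have : 0 ≤ ∑ j, d j := Finset.sum_nonneg fun j _ => hd0 j
    linarith
  -- zero propagation
  have hzero : ∀ l, w l = 0 → ∀ k, W k l ≠ 0 → w k = 0 := by
    intro l hl k hk
    have h0 : ∑ k, w k * P k l = 0 := by rw [hwP l, hl, mul_zero]
    have hterm := (Finset.sum_eq_zero_iff_of_nonneg
      (fun i _ => mul_nonneg (abs_nonneg _) (hPnn i l))).mp h0 k (Finset.mem_univ k)
    have hPkl : 0 < P k l := lt_of_lt_of_le (lt_of_le_of_ne (hpos k l) (Ne.symm hk)) (hPW k l)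
    exact by
      rcases mul_eq_zero.mp hterm with h | h
      · exact h
      · exact absurd h (ne_of_gt hPkl)
  have hwpos : ∀ k, 0 < w k := by
    by_contra hcon
    push_neg at hcon
    obtain ⟨l, hl⟩ := hcon
    have hl0 : w l = 0 := le_antisymm hl (abs_nonneg _)
    have hall : ∀ j, w j = 0 := by
      intro j
      have hreach : Reaches W l j := hSC l j
      induction hreach with
      | refl => exact hl0
      | tail _ hab ih => exact hzero _ ih _ hab
    exact hv0 (funext fun k => abs_eq_zero.mp (hall k))
  refine ⟨w, hwpos, fun l => ?_⟩
  have : ∑ k, w k * sLap W k l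
      = (∑ k, w k * (if k = l then c else 0)) - ∑ k, w k * P k l := by
    rw [← Finset.sum_sub_distrib]
    exact Finset.sum_congr rfl fun k _ => by rw [hLP k l]; ring
  rw [this, hwP l]
  simp only [mul_ite, mul_zero, Finset.sum_ite_eq', Finset.mem_univ, if_true]
  ring

lemma spectral_gap {N : ℕ} (hN : 2 ≤ N) (W : Matrix (Fin N) (Fin N) ℝ)
    (hSC : StronglyConnected W) (hpos : ∀ k l, 0 ≤ W k l)
    (w : Fin N → ℝ) (hw : ∀ k, 0 < w k) :
    ∃ lam > 0, ∀ y : Fin N → ℝ, (∑ k, w k * y k = 0) →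
      lam * (∑ k, w k * (y k)^2) ≤ ∑ k, ∑ l, w k * W k l * (y k - y l)^2 := by
  have hN0 : 0 < N := by omega
  set q : (Fin N → ℝ) → ℝ := fun y => ∑ k, ∑ l, w k * W k l * (y k - y l)^2 with hq
  set Vw : (Fin N → ℝ) → ℝ := fun y => ∑ k, w k * (y k)^2 with hVw
  have hqnn : ∀ y, 0 ≤ q y := fun y =>
    Finset.sum_nonneg fun k _ => Finset.sum_nonneg fun l _ =>
      mul_nonneg (mul_nonneg (hw k).le (hpos k l)) (sq_nonneg _)
  set S : Set (Fin N → ℝ) := {y | (∑ k, w k * y k = 0) ∧ Vw y = 1} with hS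
  -- continuity
  have hcmean : Continuous fun y : Fin N → ℝ => ∑ k, w k * y k :=
    continuous_finset_sum _ fun k _ => continuous_const.mul (continuous_apply k)
  have hcV : Continuous Vw :=
    continuous_finset_sum _ fun k _ => continuous_const.mul ((continuous_apply k).pow 2)
  have hcq : Continuous q :=
    continuous_finset_sum _ fun k _ => continuous_finset_sum _ fun l _ =>
      continuous_const.mul (((continuous_apply k).sub (continuous_apply l)).pow 2)
  have hclosed : IsClosed S :=
    (isClosed_eq hcmean continuous_const).inter (isClosed_eq hcV continuous_const)
  have hbdd : Bornology.IsBounded S := by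
    rw [Metric.isBounded_iff_subset_closedBall 0]
    refine ⟨Real.sqrt (∑ j, (w j)⁻¹), fun y hy => ?_⟩
    rw [Metric.mem_closedBall, dist_zero_right]
    rw [pi_norm_le_iff_of_nonneg (Real.sqrt_nonneg _)]
    intro k
    have h1 : w k * (y k)^2 ≤ 1 := by
      have h0 := Finset.single_le_sum
        (f := fun j => w j * (y j)^2)
        (fun j _ => mul_nonneg (hw j).le (sq_nonneg _)) (Finset.mem_univ k)
      exact le_of_le_of_eq h0 hy.2
    have h2 : (y k)^2 ≤ (w k)⁻¹ := by
      rw [inv_eq_one_div, le_div_iff₀ (hw k)]; linarith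
    have h3 : (w k)⁻¹ ≤ ∑ j, (w j)⁻¹ :=
      Finset.single_le_sum (fun j _ => (inv_pos.mpr (hw j)).le) (Finset.mem_univ k)
    have : |y k| ≤ Real.sqrt (∑ j, (w j)⁻¹) := by
      rw [← Real.sqrt_sq_eq_abs]
      exact Real.sqrt_le_sqrt (h2.trans h3)
    simpa [Real.norm_eq_abs] using this
  have hcompact : IsCompact S := Metric.isCompact_of_isClosed_isBounded hclosed hbdd
  -- nonemptiness
  have hSne : S.Nonempty := by
    set i : Fin N := ⟨0, by omega⟩ with hi
    set j : Fin N := ⟨1, by omega⟩ with hj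
    have hij : i ≠ j := by simp [hi, hj, Fin.ext_iff]
    set y0 : Fin N → ℝ := fun k => (if k = i then w j else 0) + (if k = j then -(w i) else 0)
      with hy0
    have hmean : ∑ k, w k * y0 k = 0 := by
      have h1 : ∀ k, w k * y0 k
          = (if k = i then w k * w j else 0) + (if k = j then w k * (-(w i)) else 0) := by
        intro k
        simp only [hy0, mul_add, mul_ite, mul_zero]
      rw [Finset.sum_congr rfl fun k _ => h1 k, Finset.sum_add_distrib,
        Finset.sum_ite_eq', Finset.sum_ite_eq']
      simp only [Finset.mem_univ, if_true]
      ring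
    have hVw0 : Vw y0 = w i * (w j)^2 + w j * (w i)^2 := by
      have h1 : ∀ k, w k * (y0 k)^2
          = (if k = i then w k * (w j)^2 else 0) + (if k = j then w k * (w i)^2 else 0) := by
        intro k
        by_cases h1 : k = i
        · have h2 : k ≠ j := by rw [h1]; exact hij
          simp [hy0, h1, h2, hij]
        · by_cases h2 : k = j
          · simp [hy0, h1, h2, Ne.symm hij]
          · simp [hy0, h1, h2]
      show (∑ k, w k * (y0 k)^2) = _
      rw [Finset.sum_congr rfl fun k _ => h1 k, Finset.sum_add_distrib,
        Finset.sum_ite_eq', Finset.sum_ite_eq']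
      simp only [Finset.mem_univ, if_true]
    have hV0pos : 0 < Vw y0 := by
      rw [hVw0]
      have := hw i; have := hw j
      positivity
    set s : ℝ := Real.sqrt (Vw y0) with hs
    have hspos : 0 < s := Real.sqrt_pos.mpr hV0pos
    refine ⟨fun k => y0 k / s, ?_, ?_⟩
    · show (∑ k, w k * (y0 k / s)) = 0
      have : ∑ k, w k * (y0 k / s) = (∑ k, w k * y0 k) / s := by
        rw [Finset.sum_div]
        exact Finset.sum_congr rfl fun k _ => (mul_div_assoc _ _ _).symm
      rw [this, hmean, zero_div]
    · show (∑ k, w k * (y0 k / s)^2) = 1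
      have hss : s^2 = Vw y0 := Real.sq_sqrt hV0pos.le
      have : ∑ k, w k * (y0 k / s)^2 = (∑ k, w k * (y0 k)^2) / s^2 := by
        rw [Finset.sum_div]
        exact Finset.sum_congr rfl fun k _ => by rw [div_pow, mul_div_assoc]
      rw [this, hss]
      exact div_self (ne_of_gt hV0pos)
  obtain ⟨ym, hymS, hymin⟩ := hcompact.exists_isMinOn hSne hcq.continuousOn
  set lam : ℝ := q ym with hlam
  -- positivity of lam
  have hlampos : 0 < lam := by
    rcases lt_or_eq_of_le (hqnn ym) with h | h
    · exact h
    have hq0 : q ym = 0 := h.symm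
    exfalso
    have hedge : ∀ k l, W k l ≠ 0 → ym k = ym l := by
      intro k l hkl
      have h1 := (Finset.sum_eq_zero_iff_of_nonneg
        (fun k _ => Finset.sum_nonneg fun l _ =>
          mul_nonneg (mul_nonneg (hw k).le (hpos k l)) (sq_nonneg _))).mp hq0 k
        (Finset.mem_univ k)
      have h2 := (Finset.sum_eq_zero_iff_of_nonneg
        (fun l _ => mul_nonneg (mul_nonneg (hw k).le (hpos k l)) (sq_nonneg _))).mp h1 l
        (Finset.mem_univ l)
      have hWpos : 0 < W k l := lt_of_le_of_ne (hpos k l) (Ne.symm hkl)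
      have : (ym k - ym l)^2 = 0 := by
        rcases mul_eq_zero.mp h2 with h3 | h3
        · rcases mul_eq_zero.mp h3 with h4 | h4
          · exact absurd h4 (ne_of_gt (hw k))
          · exact absurd h4 (ne_of_gt hWpos)
        · exact h3
      have := pow_eq_zero_iff (n := 2) (by norm_num) |>.mp this
      linarith
    set i0 : Fin N := ⟨0, by omega⟩
    have hconst : ∀ j, ym j = ym i0 := by
      intro j
      have hreach : Reaches W i0 j := hSC i0 j
      induction hreach with
      | refl => rfl
      | tail _ hab ih => exact (hedge _ _ hab).trans ih
    have hmean0 : (∑ k, w k * ym k) = 0 := hymS.1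
    have : ∑ k, w k * ym k = (∑ k, w k) * ym i0 := by
      rw [Finset.sum_mul]
      exact Finset.sum_congr rfl fun k _ => by rw [hconst k]
    rw [this] at hmean0
    have hwsum : 0 < ∑ k, w k :=
      Finset.sum_pos (fun k _ => hw k) ⟨i0, Finset.mem_univ i0⟩
    have hym0 : ym i0 = 0 := by
      rcases mul_eq_zero.mp hmean0 with h | h
      · exact absurd h (ne_of_gt hwsum)
      · exact h
    have hV1 : Vw ym = 1 := hymS.2
    have : Vw ym = 0 := by
      show (∑ k, w k * (ym k)^2) = 0
      refine Finset.sum_eq_zero fun k _ => ?_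
      rw [hconst k, hym0]
      ring
    rw [this] at hV1
    norm_num at hV1
  -- scaling
  refine ⟨lam, hlampos, fun y hy => ?_⟩
  rcases eq_or_lt_of_le (Finset.sum_nonneg
    (fun k (_ : k ∈ Finset.univ) => mul_nonneg (hw k).le (sq_nonneg (y k)))) with h | h
  · rw [← h, mul_zero]
    exact hqnn y
  · set s : ℝ := Real.sqrt (Vw y) with hs
    have hVypos : 0 < Vw y := h
    have hspos : 0 < s := Real.sqrt_pos.mpr hVypos
    have hss : s^2 = Vw y := Real.sq_sqrt hVypos.le
    set z : Fin N → ℝ := fun k => y k / s with hz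
    have hzS : z ∈ S := by
      constructor
      · show (∑ k, w k * (y k / s)) = 0
        have : ∑ k, w k * (y k / s) = (∑ k, w k * y k) / s := by
          rw [Finset.sum_div]
          exact Finset.sum_congr rfl fun k _ => (mul_div_assoc _ _ _).symm
        rw [this, hy, zero_div]
      · show (∑ k, w k * (y k / s)^2) = 1
        have : ∑ k, w k * (y k / s)^2 = (∑ k, w k * (y k)^2) / s^2 := by
          rw [Finset.sum_div]
          exact Finset.sum_congr rfl fun k _ => by rw [div_pow, mul_div_assoc]
        rw [this, hss]
        exact div_self (ne_of_gt hVypos)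
    have hqz : lam ≤ q z := hymin hzS
    have hqzval : q z = q y / s^2 := by
      show (∑ k, ∑ l, w k * W k l * (y k / s - y l / s)^2) = _
      rw [Finset.sum_div]
      refine Finset.sum_congr rfl fun k _ => ?_
      rw [Finset.sum_div]
      refine Finset.sum_congr rfl fun l _ => ?_
      rw [div_sub_div_same, div_pow, mul_div_assoc]
    rw [hqzval, hss] at hqz
    calc lam * Vw y ≤ (q y / Vw y) * Vw y :=
          mul_le_mul_of_nonneg_right hqz hVypos.le
      _ = q y := div_mul_cancel₀ _ (ne_of_gt hVypos)

lemma energy_identity {N : ℕ} (W : Matrix (Fin N) (Fin N) ℝ) (hpos : ∀ k l, 0 ≤ W k l)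
    (w : Fin N → ℝ) (hwL : ∀ l, ∑ k, w k * sLap W k l = 0) (y : Fin N → ℝ) :
    ∑ k, ∑ l, w k * W k l * (y k - y l)^2
      = 2 * ∑ k, w k * y k * ((sLap W).mulVec y k) := by
  set d : Fin N → ℝ := fun k => ∑ l, W k l with hd
  have habs : ∀ k, (∑ l, |W k l|) = d k := fun k =>
    Finset.sum_congr rfl fun l _ => abs_of_nonneg (hpos k l)
  have hcol : ∀ l, ∑ k, w k * W k l = w l * d l := by
    intro l
    have h0 := hwL l
    have h1 : ∑ k, w k * sLap W k l
        = (∑ k, (if k = l then w k * d k else 0)) - ∑ k, w k * W k l := by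
      rw [← Finset.sum_sub_distrib]
      refine Finset.sum_congr rfl fun k _ => ?_
      rw [sLap_apply, habs k]
      by_cases h : k = l
      · simp [h]; ring
      · simp [h]
    rw [h1, Finset.sum_ite_eq', if_pos (Finset.mem_univ l)] at h0
    linarith
  have hmv : ∀ k, (sLap W).mulVec y k = d k * y k - ∑ l, W k l * y l := by
    intro k
    simp only [Matrix.mulVec, dotProduct]
    have h1 : ∑ l, sLap W k l * y l
        = (∑ l, (if k = l then d k * y l else 0)) - ∑ l, W k l * y l := by
      rw [← Finset.sum_sub_distrib]
      refine Finset.sum_congr rfl fun l _ => ?_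
      rw [sLap_apply, habs k]
      by_cases h : k = l
      · simp [h]; ring
      · simp [h]
    rw [h1, Finset.sum_ite_eq, if_pos (Finset.mem_univ k)]
  set A : ℝ := ∑ k, w k * d k * (y k)^2 with hA
  set B : ℝ := ∑ k, ∑ l, w k * W k l * (y k * y l) with hB
  have hRHS : 2 * ∑ k, w k * y k * ((sLap W).mulVec y k) = 2*A - 2*B := by
    have h2 : ∀ k, w k * y k * ((sLap W).mulVec y k)
        = w k * d k * (y k)^2 - ∑ l, w k * W k l * (y k * y l) := by
      intro k
      rw [hmv k, mul_sub]
      have h3 : w k * y k * ∑ l, W k l * y l = ∑ l, w k * W k l * (y k * y l) := by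
        rw [Finset.mul_sum]; exact Finset.sum_congr rfl fun l _ => by ring
      rw [h3]; ring
    rw [Finset.sum_congr rfl fun k _ => h2 k, Finset.sum_sub_distrib]
    rw [← hA, ← hB]
    ring
  rw [hRHS]
  have h4 : ∀ k, ∑ l, w k * W k l * (y k)^2 = w k * d k * (y k)^2 := by
    intro k
    have : ∀ l, w k * W k l * (y k)^2 = (w k * (y k)^2) * W k l := fun l => by ring
    rw [Finset.sum_congr rfl fun l _ => this l, ← Finset.mul_sum]
    show w k * y k ^ 2 * d k = _
    ring
  have h5 : ∑ k, ∑ l, w k * W k l * (y l)^2 = A := by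
    rw [Finset.sum_comm]
    refine Finset.sum_congr rfl fun l _ => ?_
    have : ∀ k, w k * W k l * (y l)^2 = (w k * W k l) * (y l)^2 := fun k => by ring
    rw [Finset.sum_congr rfl fun k _ => this k, ← Finset.sum_mul, hcol l]
  calc ∑ k, ∑ l, w k * W k l * (y k - y l)^2
      = ∑ k, ((∑ l, (w k * W k l * (y k)^2 + w k * W k l * (y l)^2))
          - ∑ l, 2 * (w k * W k l * (y k * y l))) := by
        refine Finset.sum_congr rfl fun k _ => ?_
        rw [← Finset.sum_sub_distrib]
        exact Finset.sum_congr rfl fun l _ => by ring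
    _ = (∑ k, ((∑ l, w k * W k l * (y k)^2) + ∑ l, w k * W k l * (y l)^2))
          - ∑ k, ∑ l, 2 * (w k * W k l * (y k * y l)) := by
        rw [Finset.sum_sub_distrib]
        congr 1
        exact Finset.sum_congr rfl fun k _ => by rw [Finset.sum_add_distrib]
    _ = (A + A) - 2 * B := by
        have e1 : ∑ k, ((∑ l, w k * W k l * (y k)^2) + ∑ l, w k * W k l * (y l)^2)
            = A + A := by
          rw [Finset.sum_add_distrib, h5]
          congr 1
          rw [hA]
          exact Finset.sum_congr rfl fun k _ => h4 k
        have e2 : ∑ k, ∑ l, 2 * (w k * W k l * (y k * y l)) = 2 * B := by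
          rw [hB, Finset.mul_sum]
          exact Finset.sum_congr rfl fun k _ => by rw [Finset.mul_sum]
        rw [e1, e2]
    _ = 2*A - 2*B := by ring

theorem prescribed_time_consensus_strong_nonneg
    {N : ℕ} (hN : 2 ≤ N) (W : Matrix (Fin N) (Fin N) ℝ)
    (hdiag : ∀ k, W k k = 0)
    (hSC : StronglyConnected W)
    (hpos : ∀ k l, 0 ≤ W k l)
    (κ ρ1 ρ2 T1 : ℝ) (hκ : 2 < κ) (hρ1 : 0 < ρ1) (hρ2 : 0 < ρ2) (hT1 : 0 < T1)
    (X : ℝ → Fin N → ℝ) (hX : NominalTraj W κ ρ1 ρ2 T1 X) :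
    ∃ c : ℝ, ∀ t : ℝ, T1 ≤ t → ∀ k, X t k = c := by
  obtain ⟨hXc, hXd⟩ := hX
  have hN0 : 0 < N := by omega
  obtain ⟨w, hwpos, hwL⟩ := exists_pos_left_null hN0 W hSC hpos
  obtain ⟨lam, hlam, hgap⟩ := spectral_gap hN W hSC hpos w hwpos
  set a : ℝ → ℝ := fun t => ρ1 + ρ2 * gain κ T1 t with ha
  have hκ0 : (0:ℝ) < κ := by linarith
  have hgain_nonneg : ∀ t, 0 ≤ gain κ T1 t := by
    intro t
    unfold gain
    split
    · next h => exact div_nonneg hκ0.le (by linarith [h.2])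
    · exact le_refl 0
  have ha_nonneg : ∀ t, 0 ≤ a t := by
    intro t
    have h1 := hgain_nonneg t
    have h2 : 0 ≤ ρ2 * gain κ T1 t := mul_nonneg hρ2.le h1
    show 0 ≤ ρ1 + ρ2 * gain κ T1 t
    linarith
  have hwsum : 0 < ∑ k, w k :=
    Finset.sum_pos (fun k _ => hwpos k) ⟨⟨0, hN0⟩, Finset.mem_univ _⟩
  set m : ℝ := (∑ k, w k * X 0 k) / (∑ k, w k) with hm
  -- componentwise derivative
  have hXk : ∀ t, 0 ≤ t → t ≠ T1 → ∀ k, HasDerivAt (fun s => X s k)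
      (-(a t) * ((sLap W).mulVec (X t) k)) t := by
    intro t ht hne k
    exact (hasDerivAt_pi.mp (hXd t ht hne)) k
  set V : ℝ → ℝ := fun t => ∑ k, w k * (X t k - m)^2 with hV
  have hVnn : ∀ t, 0 ≤ V t := fun t =>
    Finset.sum_nonneg fun k _ => mul_nonneg (hwpos k).le (sq_nonneg _)
  have hVc : Continuous V := by
    refine continuous_finset_sum _ fun k _ => continuous_const.mul (Continuous.pow ?_ 2)
    exact ((continuous_apply k).comp hXc).sub continuous_const
  have hmulVec_eq : ∀ t, (sLap W).mulVec (X t) = (sLap W).mulVec (fun k => X t k - m) := by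
    intro t
    have h1 : (fun k => X t k - m) = (X t) - (fun _ => m) := rfl
    rw [h1, Matrix.mulVec_sub]
    funext k
    have h2 := sLap_mulVec_const W hpos m k
    simp [h2]
  set q : ℝ → ℝ := fun t => ∑ k, ∑ l, w k * W k l * ((X t k - m) - (X t l - m))^2 with hq
  have hqnn : ∀ t, 0 ≤ q t := fun t =>
    Finset.sum_nonneg fun k _ => Finset.sum_nonneg fun l _ =>
      mul_nonneg (mul_nonneg (hwpos k).le (hpos k l)) (sq_nonneg _)
  have hVd : ∀ t, 0 ≤ t → t ≠ T1 → HasDerivAt V (-(a t) * q t) t := by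
    intro t ht hne
    have h1 : ∀ k, HasDerivAt (fun s => w k * (X s k - m)^2)
        (w k * (2 * (X t k - m) * (-(a t) * ((sLap W).mulVec (X t) k)))) t := by
      intro k
      have h2 : HasDerivAt (fun s => X s k - m) (-(a t) * ((sLap W).mulVec (X t) k)) t :=
        (hXk t ht hne k).sub_const m
      have h3 : HasDerivAt (fun s => w k * (X s k - m)^2)
          (w k * (((2:ℕ):ℝ) * (X t k - m)^(2-1) * (-(a t) * ((sLap W).mulVec (X t) k)))) t :=
        (h2.fun_pow 2).const_mul (w k)
      convert h3 using 1
      push_cast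
      ring
    have h4 : HasDerivAt V
        (∑ k, w k * (2 * (X t k - m) * (-(a t) * ((sLap W).mulVec (X t) k)))) t :=
      HasDerivAt.fun_sum (fun k _ => h1 k)
    have h5 : ∑ k, w k * (2 * (X t k - m) * (-(a t) * ((sLap W).mulVec (X t) k)))
        = -(a t) * q t := by
      rw [hmulVec_eq t]
      have h6 := energy_identity W hpos w hwL (fun k => X t k - m)
      have h7 : ∀ k, w k * (2 * (X t k - m) * (-(a t) * ((sLap W).mulVec (fun j => X t j - m) k)))
          = (-(a t) * 2) * (w k * (X t k - m) * ((sLap W).mulVec (fun j => X t j - m) k)) := by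
        intro k; ring
      rw [Finset.sum_congr rfl fun k _ => h7 k, ← Finset.mul_sum]
      have h8 : q t = 2 * ∑ k, w k * (X t k - m) * ((sLap W).mulVec (fun j => X t j - m) k) := h6
      rw [h8]
      ring
    rw [h5] at h4
    exact h4
  -- conservation of weighted mean
  have hmean : ∀ t, 0 ≤ t → t < T1 → ∑ k, w k * X t k = ∑ k, w k * X 0 k := by
    intro t ht htlt
    rcases eq_or_lt_of_le ht with h | h
    · rw [← h]
    · have hcont : ContinuousOn (fun s => ∑ k, w k * X s k) (Set.Icc 0 t) :=
        (continuous_finset_sum _ fun k _ =>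
          continuous_const.mul ((continuous_apply k).comp hXc)).continuousOn
      have hderiv : ∀ s ∈ Set.Ico 0 t,
          HasDerivWithinAt (fun u => ∑ k, w k * X u k) 0 (Set.Ici s) s := by
        intro s hs
        have hsne : s ≠ T1 := ne_of_lt (hs.2.trans htlt)
        have h7 : HasDerivAt (fun u => ∑ k, w k * X u k)
            (∑ k, w k * (-(a s) * ((sLap W).mulVec (X s) k))) s :=
          HasDerivAt.fun_sum fun k _ => ((hXk s hs.1 hsne k).const_mul (w k))
        have h8 : ∑ k, w k * (-(a s) * ((sLap W).mulVec (X s) k)) = 0 := by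
          have h9 : ∀ k, w k * (-(a s) * ((sLap W).mulVec (X s) k))
              = -(a s) * (w k * ((sLap W).mulVec (X s) k)) := fun k => by ring
          rw [Finset.sum_congr rfl fun k _ => h9 k, ← Finset.mul_sum,
            wLz W w hwL (X s), mul_zero]
        rw [h8] at h7
        exact h7.hasDerivWithinAt
      exact constant_of_has_deriv_right_zero hcont hderiv t (Set.mem_Icc.mpr ⟨ht, le_refl t⟩)
  have hymean : ∀ t, 0 ≤ t → t < T1 → ∑ k, w k * (X t k - m) = 0 := by
    intro t ht hlt
    have h1 : ∑ k, w k * (X t k - m) = (∑ k, w k * X t k) - (∑ k, w k) * m := by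
      rw [Finset.sum_congr rfl (fun k _ => mul_sub (w k) (X t k) m),
        Finset.sum_sub_distrib, ← Finset.sum_mul]
    rw [h1, hmean t ht hlt, hm]
    field_simp
    ring
  -- the comparison exponent
  set B : ℝ → ℝ := fun t =>
    lam * (ρ1 * t + ρ2 * κ * (Real.log T1 - Real.log (T1 - t))) with hB
  have hBd : ∀ t, 0 ≤ t → t < T1 → HasDerivAt B (lam * a t) t := by
    intro t ht hlt
    have hT1t : (0:ℝ) < T1 - t := by linarith
    have hlog : HasDerivAt (fun s => Real.log (T1 - s)) ((T1 - t)⁻¹ * (-1)) t := by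
      have h1 : HasDerivAt (fun s : ℝ => T1 - s) (-1) t := (hasDerivAt_id t).const_sub T1
      exact (Real.hasDerivAt_log (ne_of_gt hT1t)).comp t h1
    have h3 : HasDerivAt B
        (lam * (ρ1 * 1 + ρ2 * κ * (0 - (T1 - t)⁻¹ * (-1)))) t :=
      (((hasDerivAt_id t).const_mul ρ1).add
        (((hasDerivAt_const t (Real.log T1)).sub hlog).const_mul (ρ2 * κ))).const_mul lam
    convert h3 using 1
    have hg : gain κ T1 t = κ / (T1 - t) := by unfold gain; rw [if_pos ⟨ht, hlt⟩]
    show lam * (ρ1 + ρ2 * gain κ T1 t) = _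
    rw [hg]
    field_simp
    try ring
  -- decay estimate on [0, T1)
  have hVle : ∀ t, 0 ≤ t → t < T1 → V t ≤ V 0 * Real.exp (-(B t)) := by
    intro t ht hlt
    have hB0 : B 0 = 0 := by
      show lam * (ρ1 * 0 + ρ2 * κ * (Real.log T1 - Real.log (T1 - 0))) = 0
      rw [sub_zero]
      ring
    rcases eq_or_lt_of_le ht with h | h
    · rw [← h, hB0]
      simp
    · set G : ℝ → ℝ := fun s => V s * Real.exp (B s) with hG
      have hGd : ∀ s, 0 ≤ s → s < T1 → HasDerivAt G
          (-(a s) * q s * Real.exp (B s) + V s * (Real.exp (B s) * (lam * a s))) s := by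
        intro s hs hslt
        exact (hVd s hs (ne_of_lt hslt)).mul ((hBd s hs hslt).exp)
      have hmono : AntitoneOn G (Set.Icc 0 t) := by
        apply antitoneOn_of_deriv_nonpos (convex_Icc 0 t)
        · intro s hs
          exact (hGd s hs.1 (lt_of_le_of_lt hs.2 hlt)).continuousAt.continuousWithinAt
        · intro s hs
          rw [interior_Icc] at hs
          exact ((hGd s hs.1.le ((hs.2.trans hlt))).differentiableAt).differentiableWithinAt
        · intro s hs
          rw [interior_Icc] at hs
          have hds := hGd s hs.1.le (hs.2.trans hlt)
          rw [hds.deriv]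
          have hqgap : lam * V s ≤ q s :=
            hgap (fun k => X s k - m) (hymean s hs.1.le (hs.2.trans hlt))
          have hexp := (Real.exp_pos (B s)).le
          have han := ha_nonneg s
          nlinarith [mul_nonneg (mul_nonneg han hexp) (sub_nonneg.mpr hqgap)]
      have h9 : G t ≤ G 0 :=
        hmono (Set.left_mem_Icc.mpr ht) (Set.right_mem_Icc.mpr ht) ht
      have h10 : V t * Real.exp (B t) ≤ V 0 := by
        have hg0 : G 0 = V 0 := by
          show V 0 * Real.exp (B 0) = V 0
          rw [hB0, Real.exp_zero, mul_one]
        rw [← hg0]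
        exact h9
      have hexppos := Real.exp_pos (B t)
      calc V t = V t * Real.exp (B t) * (Real.exp (B t))⁻¹ := by
            field_simp
        _ ≤ V 0 * (Real.exp (B t))⁻¹ :=
            mul_le_mul_of_nonneg_right h10 (inv_nonneg.mpr hexppos.le)
        _ = V 0 * Real.exp (-(B t)) := by rw [Real.exp_neg]
  -- limit at T1 from the left
  have hlimT1 : ∀ k, X T1 k = m := by
    have hBtop : Filter.Tendsto B (nhdsWithin T1 (Set.Iio T1)) Filter.atTop := by
      have h1 : Filter.Tendsto (fun t => T1 - t) (nhdsWithin T1 (Set.Iio T1))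
          (nhdsWithin 0 (Set.Ioi 0)) := by
        rw [tendsto_nhdsWithin_iff]
        constructor
        · have hcont : Continuous (fun t : ℝ => T1 - t) := continuous_const.sub continuous_id
          have := (hcont.tendsto T1).mono_left (nhdsWithin_le_nhds (s := Set.Iio T1))
          simpa using this
        · exact eventually_nhdsWithin_of_forall fun x hx => by
            simp only [Set.mem_Ioi]
            have : x < T1 := hx
            linarith
      have h2 : Filter.Tendsto (fun t => Real.log (T1 - t))
          (nhdsWithin T1 (Set.Iio T1)) Filter.atBot :=
        Real.tendsto_log_nhdsGT_zero.comp h1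
      have h3 : Filter.Tendsto (fun t => (lam * ρ2 * κ) * (- Real.log (T1 - t)))
          (nhdsWithin T1 (Set.Iio T1)) Filter.atTop := by
        have hneg : Filter.Tendsto (fun t => - Real.log (T1 - t))
            (nhdsWithin T1 (Set.Iio T1)) Filter.atTop := Filter.tendsto_neg_atBot_atTop.comp h2
        exact hneg.const_mul_atTop (by positivity)
      have h4 : Filter.Tendsto
          (fun t => lam * ρ1 * t + lam * ρ2 * κ * Real.log T1)
          (nhdsWithin T1 (Set.Iio T1))
          (nhds (lam * ρ1 * T1 + lam * ρ2 * κ * Real.log T1)) := by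
        have : Continuous fun t : ℝ => lam * ρ1 * t + lam * ρ2 * κ * Real.log T1 :=
          (continuous_const.mul continuous_id).add continuous_const
        exact (this.tendsto T1).mono_left nhdsWithin_le_nhds
      have h5 := h4.add_atTop h3
      refine h5.congr fun t => ?_
      show _ = lam * (ρ1 * t + ρ2 * κ * (Real.log T1 - Real.log (T1 - t)))
      ring
    have hexp0 : Filter.Tendsto (fun t => Real.exp (-(B t)))
        (nhdsWithin T1 (Set.Iio T1)) (nhds 0) := by
      have := Filter.tendsto_neg_atTop_atBot.comp hBtop
      exact Real.tendsto_exp_atBot.comp this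
    intro k
    have hsq : Filter.Tendsto (fun t => (X t k - m)^2) (nhdsWithin T1 (Set.Iio T1)) (nhds 0) := by
      apply squeeze_zero' (Filter.Eventually.of_forall fun t => sq_nonneg _)
        ?_ (by simpa using hexp0.const_mul (V 0 / w k))
      have hmem : Set.Ioo 0 T1 ∈ nhdsWithin T1 (Set.Iio T1) :=
        Ioo_mem_nhdsLT_of_mem (Set.mem_Ioc.mpr ⟨hT1, le_refl T1⟩)
      filter_upwards [hmem] with t htm
      have hVt := hVle t htm.1.le htm.2
      have hterm : w k * (X t k - m)^2 ≤ V t :=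
        Finset.single_le_sum (f := fun j => w j * (X t j - m)^2)
          (fun j _ => mul_nonneg (hwpos j).le (sq_nonneg _)) (Finset.mem_univ k)
      have hwk := hwpos k
      rw [div_mul_eq_mul_div, le_div_iff₀ hwk]
      calc (X t k - m)^2 * w k = w k * (X t k - m)^2 := by ring
        _ ≤ V t := hterm
        _ ≤ V 0 * Real.exp (-(B t)) := hVt
    have habs : Filter.Tendsto (fun t => |X t k - m|) (nhdsWithin T1 (Set.Iio T1)) (nhds 0) := by
      have h1 := (Real.continuous_sqrt.tendsto 0).comp hsq
      rw [Real.sqrt_zero] at h1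
      exact h1.congr fun t => Real.sqrt_sq_eq_abs (X t k - m)
    have hten : Filter.Tendsto (fun t => X t k - m) (nhdsWithin T1 (Set.Iio T1)) (nhds 0) := by
      rw [tendsto_zero_iff_abs_tendsto_zero]
      exact habs
    have hXm : Filter.Tendsto (fun t => X t k) (nhdsWithin T1 (Set.Iio T1)) (nhds m) := by
      have := hten.add_const m
      simpa using this
    have hXT : Filter.Tendsto (fun t => X t k) (nhdsWithin T1 (Set.Iio T1)) (nhds (X T1 k)) :=
      (((continuous_apply k).comp hXc).tendsto T1).mono_left nhdsWithin_le_nhds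
    exact tendsto_nhds_unique hXT hXm
  -- after T1 the trajectory stays at consensus
  refine ⟨m, fun t ht k => ?_⟩
  rcases eq_or_lt_of_le ht with h | h
  · rw [← h]; exact hlimT1 k
  · have hVmono : AntitoneOn V (Set.Icc T1 t) := by
      apply antitoneOn_of_deriv_nonpos (convex_Icc T1 t)
      · exact hVc.continuousOn
      · intro s hs
        rw [interior_Icc] at hs
        have hs0 : 0 ≤ s := le_trans hT1.le hs.1.le
        exact ((hVd s hs0 (ne_of_gt hs.1)).differentiableAt).differentiableWithinAt
      · intro s hs
        rw [interior_Icc] at hs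
        have hs0 : 0 ≤ s := le_trans hT1.le hs.1.le
        rw [(hVd s hs0 (ne_of_gt hs.1)).deriv]
        have hqn := hqnn s
        have han := ha_nonneg s
        nlinarith
    have hVT1 : V T1 = 0 := by
      show (∑ j, w j * (X T1 j - m)^2) = 0
      refine Finset.sum_eq_zero fun j _ => ?_
      rw [hlimT1 j]
      ring
    have hVt : V t ≤ 0 := by
      have h11 := hVmono (Set.left_mem_Icc.mpr h.le) (Set.right_mem_Icc.mpr h.le) h.le
      rwa [hVT1] at h11
    have hVt0 : V t = 0 := le_antisymm hVt (hVnn t)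
    have hterm := (Finset.sum_eq_zero_iff_of_nonneg
      (fun j (_ : j ∈ Finset.univ) => mul_nonneg (hwpos j).le (sq_nonneg (X t j - m)))).mp
      hVt0 k (Finset.mem_univ k)
    have hsq0 : (X t k - m)^2 = 0 := by
      rcases mul_eq_zero.mp hterm with h12 | h12
      · exact absurd h12 (ne_of_gt (hwpos k))
      · exact h12
    have := pow_eq_zero_iff (n := 2) (by norm_num) |>.mp hsq0
    linarith
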